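/- Suppose the trapping ball assumption holds with constants R > 0 and δ > 0. Then for every v₀ ∈ B_R there exists a differentiable function v : [0,∞) → ℝ^d with v(0) = v₀ and v'(t) = F(v(t)) for all t ≥ 0; moreover, every differentiable v : [0,T) → ℝ^d (with 0 < T ≤ ∞) satisfying v(0) ∈ B_R and v'(t) = F(v(t)) for all t ∈ [0,T) satisfies ‖v(t)‖ ≤ R for all t ∈ [0,T). -/

import Mathlib

open Set Filter
open scoped Topology
open scoped ENNReal NNReal

section Aux

variable {E : Type*} [NormedAddCommGroup E] [InnerProductSpace ℝ E]

/-- Radial projection onto the closed ball of radius `r`. -/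
noncomputable def ballProj (r : ℝ) (x : E) : E := if ‖x‖ ≤ r then x else (r / ‖x‖) • x

lemma ballProj_of_le {r : ℝ} {x : E} (h : ‖x‖ ≤ r) : ballProj r x = x := if_pos h

lemma norm_ballProj_le {r : ℝ} (hr : 0 ≤ r) (x : E) : ‖ballProj r x‖ ≤ r := by
  unfold ballProj
  split_ifs with h
  · exact h
  · push_neg at h
    have hx : 0 < ‖x‖ := lt_of_le_of_lt hr h
    rw [norm_smul, Real.norm_eq_abs, abs_of_nonneg (div_nonneg hr hx.le),
      div_mul_cancel₀ _ hx.ne']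

lemma ballProj_dist_aux {r : ℝ} (hr : 0 ≤ r) {x y : E} (hyx : ‖y‖ ≤ ‖x‖) :
    ‖ballProj r x - ballProj r y‖ ≤ 2 * ‖x - y‖ := by
  have hxy := norm_sub_norm_le x y
  by_cases h1 : ‖x‖ ≤ r
  · rw [ballProj_of_le h1, ballProj_of_le (hyx.trans h1)]
    nlinarith [norm_nonneg (x - y)]
  · push_neg at h1
    have hx0 : 0 < ‖x‖ := lt_of_le_of_lt hr h1
    have hq0 : 0 ≤ r / ‖x‖ := div_nonneg hr hx0.le
    have hq1 : r / ‖x‖ ≤ 1 := (div_le_one hx0).2 h1.le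
    have hqx : (r / ‖x‖) * ‖x‖ = r := div_mul_cancel₀ _ hx0.ne'
    by_cases h2 : ‖y‖ ≤ r
    · rw [ballProj_of_le h2]
      have hPx : ballProj r x = (r / ‖x‖) • x := if_neg (not_le.2 h1)
      have key : (r / ‖x‖) • x - y = (r / ‖x‖) • (x - y) + (r / ‖x‖ - 1) • y := by
        rw [smul_sub, sub_smul, one_smul]; abel
      rw [hPx, key]
      have h3 : ‖(r / ‖x‖) • (x - y) + (r / ‖x‖ - 1) • y‖
          ≤ (r / ‖x‖) * ‖x - y‖ + (1 - r / ‖x‖) * ‖y‖ := by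
        refine (norm_add_le _ _).trans (le_of_eq ?_)
        rw [norm_smul, norm_smul, Real.norm_eq_abs, Real.norm_eq_abs,
          abs_of_nonneg hq0, abs_of_nonpos (by linarith), neg_sub]
      refine h3.trans ?_
      nlinarith [norm_nonneg (x - y), norm_nonneg y,
        mul_le_mul_of_nonneg_left hyx (sub_nonneg.2 hq1)]
    · push_neg at h2
      have hy0 : 0 < ‖y‖ := lt_of_le_of_lt hr h2
      have hpy : (r / ‖y‖) * ‖y‖ = r := div_mul_cancel₀ _ hy0.ne'
      have hqp : r / ‖x‖ ≤ r / ‖y‖ := div_le_div_of_nonneg_left hr hy0 hyx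
      have hPx : ballProj r x = (r / ‖x‖) • x := if_neg (not_le.2 h1)
      have hPy : ballProj r y = (r / ‖y‖) • y := if_neg (not_le.2 h2)
      have key : (r / ‖x‖) • x - (r / ‖y‖) • y
          = (r / ‖x‖) • (x - y) + (r / ‖x‖ - r / ‖y‖) • y := by
        rw [smul_sub, sub_smul]; abel
      rw [hPx, hPy, key]
      have h3 : ‖(r / ‖x‖) • (x - y) + (r / ‖x‖ - r / ‖y‖) • y‖
          ≤ (r / ‖x‖) * ‖x - y‖ + (r / ‖y‖ - r / ‖x‖) * ‖y‖ := by
        refine (norm_add_le _ _).trans (le_of_eq ?_)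
        rw [norm_smul, norm_smul, Real.norm_eq_abs, Real.norm_eq_abs,
          abs_of_nonneg hq0, abs_of_nonpos (by linarith), neg_sub]
      refine h3.trans ?_
      have h4 : (r / ‖y‖ - r / ‖x‖) * ‖y‖ = r - (r / ‖x‖) * ‖y‖ := by
        rw [sub_mul, hpy]
      have h5 : r - (r / ‖x‖) * ‖y‖ = (r / ‖x‖) * (‖x‖ - ‖y‖) := by
        rw [mul_sub, hqx]
      nlinarith [norm_nonneg (x - y), mul_le_mul_of_nonneg_left hxy hq0,
        mul_le_mul_of_nonneg_right hq1 (norm_nonneg (x - y))]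

lemma lipschitzWith_ballProj {r : ℝ} (hr : 0 ≤ r) : LipschitzWith 2 (ballProj (E := E) r) := by
  apply LipschitzWith.of_dist_le_mul
  intro x y
  rcases le_total ‖y‖ ‖x‖ with h | h
  · simpa [dist_eq_norm] using ballProj_dist_aux hr h
  · rw [dist_comm, dist_comm x y]
    simpa [dist_eq_norm] using ballProj_dist_aux hr h

/-- Invariance of the trapping ball: any solution of `v' = G v` starting in the ball of radius
`R` stays there, on any forward time set `s`. -/
lemma stays_in_ball (G : E → E) (R δ : ℝ) (hR : 0 < R) (hδ : 0 < δ)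
    (htrap : ∀ x : E, ‖x‖ ∈ Icc R (R + δ) → (inner ℝ (G x) x : ℝ) ≤ 0)
    (s : Set ℝ) (h0 : (0 : ℝ) ∈ s) (hs : ∀ t ∈ s, Icc (0 : ℝ) t ⊆ s)
    (v : ℝ → E) (hv0 : ‖v 0‖ ≤ R)
    (hv : ∀ t ∈ s, HasDerivWithinAt v (G (v t)) s t) :
    ∀ t ∈ s, 0 ≤ t → ‖v t‖ ≤ R := by
  intro t₁ ht₁s ht₁0
  by_contra hcon
  push_neg at hcon
  have hsub : Icc (0 : ℝ) t₁ ⊆ s := hs t₁ ht₁s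
  have hvcont : ContinuousOn v (Icc 0 t₁) := fun t ht =>
    ((hv t (hsub ht)).continuousWithinAt).mono hsub
  have hnormcont : ContinuousOn (fun t => ‖v t‖) (Icc 0 t₁) := hvcont.norm
  set K : Set ℝ := Icc (0 : ℝ) t₁ ∩ (fun t => ‖v t‖) ⁻¹' Iic R with hKdef
  have hKmem : ∀ {t : ℝ}, t ∈ K ↔ t ∈ Icc (0 : ℝ) t₁ ∧ ‖v t‖ ≤ R := by
    intro t; simp [hKdef]
  have hKne : K.Nonempty := ⟨0, hKmem.2 ⟨left_mem_Icc.2 ht₁0, hv0⟩⟩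
  have hKbdd : BddAbove K := ⟨t₁, fun x hx => (hKmem.1 hx).1.2⟩
  have hKclosed : IsClosed K :=
    hnormcont.preimage_isClosed_of_isClosed isClosed_Icc isClosed_Iic
  set c := sSup K with hc
  have hcK : c ∈ K := hKclosed.csSup_mem hKne hKbdd
  obtain ⟨hc1, hc2⟩ := hKmem.1 hcK
  have hct₁ : c < t₁ := lt_of_le_of_ne hc1.2 (fun h => by
    rw [h] at hc2; exact absurd hc2 (not_le.2 hcon))
  have hgt : ∀ t ∈ Ioc c t₁, R < ‖v t‖ := by
    intro t ht
    by_contra hle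
    push_neg at hle
    have : t ∈ K := hKmem.2 ⟨⟨hc1.1.trans ht.1.le, ht.2⟩, hle⟩
    exact absurd (le_csSup hKbdd this) (not_le.2 ht.1)
  have hceq : ‖v c‖ = R := by
    refine le_antisymm hc2 ?_
    have hne : (𝓝[Ioc c t₁] c).NeBot := by
      rw [nhdsWithin_Ioc_eq_nhdsGT hct₁]
      exact nhdsGT_neBot c
    have htend : Filter.Tendsto (fun t => ‖v t‖) (𝓝[Ioc c t₁] c) (𝓝 ‖v c‖) :=
      (hnormcont c hc1).mono_left (nhdsWithin_mono _ (fun x hx => ⟨hc1.1.trans hx.1.le, hx.2⟩))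
    exact ge_of_tendsto htend
      (Filter.eventually_of_mem self_mem_nhdsWithin (fun t ht => (hgt t ht).le))
  obtain ⟨t₂, ht₂mem, ht₂gt, ht₂le⟩ :
      ∃ t₂ ∈ Ioc c t₁, R < ‖v t₂‖ ∧ ∀ t ∈ Icc c t₂, ‖v t‖ ≤ R + δ := by
    by_cases hall : ∀ t ∈ Icc c t₁, ‖v t‖ ≤ R + δ
    · exact ⟨t₁, ⟨hct₁, le_rfl⟩, hcon, fun t ht => hall t ht⟩
    · push_neg at hall
      obtain ⟨t', ht'1, ht'2⟩ := hall
      set K2 : Set ℝ := Icc c t₁ ∩ (fun t => ‖v t‖) ⁻¹' Ici (R + δ) with hK2def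
      have hK2mem : ∀ {t : ℝ}, t ∈ K2 ↔ t ∈ Icc c t₁ ∧ R + δ ≤ ‖v t‖ := by
        intro t; simp [hK2def]
      have hK2ne : K2.Nonempty := ⟨t', hK2mem.2 ⟨ht'1, ht'2.le⟩⟩
      have hK2bdd : BddBelow K2 := ⟨c, fun x hx => (hK2mem.1 hx).1.1⟩
      have hK2closed : IsClosed K2 := by
        refine (hnormcont.mono ?_).preimage_isClosed_of_isClosed isClosed_Icc isClosed_Ici
        exact Icc_subset_Icc hc1.1 le_rfl
      set t₂ := sInf K2 with ht₂def
      have ht₂K2 : t₂ ∈ K2 := hK2closed.csInf_mem hK2ne hK2bdd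
      obtain ⟨ht₂1, ht₂2⟩ := hK2mem.1 ht₂K2
      have hct₂ : c < t₂ := lt_of_le_of_ne ht₂1.1 (fun h => by
        rw [← h] at ht₂2; rw [hceq] at ht₂2; linarith)
      have hlt : ∀ t ∈ Ico c t₂, ‖v t‖ < R + δ := by
        intro t ht
        by_contra hle
        push_neg at hle
        have : t ∈ K2 := hK2mem.2 ⟨⟨ht.1, ht.2.le.trans ht₂1.2⟩, hle⟩
        exact absurd (csInf_le hK2bdd this) (not_le.2 ht.2)
      have ht₂eq : ‖v t₂‖ ≤ R + δ := by
        have hne : (𝓝[Ico c t₂] t₂).NeBot := by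
          rw [nhdsWithin_Ico_eq_nhdsLT hct₂]
          exact nhdsLT_neBot t₂
        have hsub2 : Ico c t₂ ⊆ Icc 0 t₁ := fun x hx =>
          ⟨hc1.1.trans hx.1, hx.2.le.trans ht₂1.2⟩
        have htend : Filter.Tendsto (fun t => ‖v t‖) (𝓝[Ico c t₂] t₂) (𝓝 ‖v t₂‖) :=
          (hnormcont t₂ ⟨hc1.1.trans ht₂1.1, ht₂1.2⟩).mono_left (nhdsWithin_mono _ hsub2)
        exact le_of_tendsto htend
          (Filter.eventually_of_mem self_mem_nhdsWithin (fun t ht => (hlt t ht).le))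
      refine ⟨t₂, ⟨hct₂, ht₂1.2⟩, by linarith, ?_⟩
      intro t ht
      rcases eq_or_lt_of_le ht.2 with h | h
      · rw [h]; exact ht₂eq
      · exact (hlt t ⟨ht.1, h⟩).le
  have hct₂ : c < t₂ := ht₂mem.1
  have hge : ∀ t ∈ Icc c t₂, R ≤ ‖v t‖ := by
    intro t ht
    rcases eq_or_lt_of_le ht.1 with h | h
    · rw [← h, hceq]
    · exact (hgt t ⟨h, ht.2.trans ht₂mem.2⟩).le
  have hIccsub : Icc c t₂ ⊆ Icc 0 t₁ := fun x hx =>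
    ⟨hc1.1.trans hx.1, hx.2.trans ht₂mem.2⟩
  have hderiv : ∀ x ∈ Ioo c t₂,
      HasDerivAt (fun t => (inner ℝ (v t) (v t) : ℝ)) (2 * inner ℝ (G (v x)) (v x)) x := by
    intro x hx
    have hx0 : 0 ≤ x := hc1.1.trans hx.1.le
    have hxlt : 0 < x ∨ 0 = x → True := fun _ => trivial
    have hx0' : 0 < x ∨ c < x := Or.inr hx.1
    have hxt₁ : x < t₁ := lt_of_lt_of_le hx.2 ht₂mem.2
    have hmem : s ∈ 𝓝 x := by
      rcases lt_or_eq_of_le hx0 with h0 | h0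
      · exact Filter.mem_of_superset (Icc_mem_nhds h0 hxt₁) hsub
      · -- x = 0 but then c = 0 < x impossible unless c < x = 0 ≤ c, contradiction
        exfalso
        exact absurd (hc1.1.trans_lt hx.1) (by rw [← h0]; exact lt_irrefl 0)
    have hvx : HasDerivAt v (G (v x)) x :=
      (hv x (hsub ⟨hx0, hxt₁.le⟩)).hasDerivAt hmem
    have h := hvx.inner (𝕜 := ℝ) hvx
    refine h.congr_deriv ?_
    rw [real_inner_comm (v x) (G (v x))]
    ring
  have hanti : AntitoneOn (fun t => (inner ℝ (v t) (v t) : ℝ)) (Icc c t₂) := by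
    apply antitoneOn_of_deriv_nonpos (convex_Icc c t₂)
    · exact (hvcont.mono hIccsub).inner (hvcont.mono hIccsub)
    · rw [interior_Icc]
      exact fun x hx => (hderiv x hx).differentiableAt.differentiableWithinAt
    · rw [interior_Icc]
      intro x hx
      rw [(hderiv x hx).deriv]
      have hxIcc : x ∈ Icc c t₂ := Ioo_subset_Icc_self hx
      have := htrap (v x) ⟨hge x hxIcc, ht₂le x hxIcc⟩
      linarith
  have h1 : (inner ℝ (v t₂) (v t₂) : ℝ) ≤ inner ℝ (v c) (v c) :=
    hanti ⟨le_rfl, hct₂.le⟩ ⟨hct₂.le, le_rfl⟩ hct₂.le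
  rw [real_inner_self_eq_norm_sq, real_inner_self_eq_norm_sq, hceq] at h1
  nlinarith [norm_nonneg (v t₂)]

end Aux

/-- Under the trapping ball assumption, solutions of the ODE
`dv/dt = F(v) = -A v - B(v,v) + f` started in the ball `B_R` exist for all
positive times, and any solution started in `B_R` stays in `B_R`. -/
theorem trapping_ball_existence_and_invariance {d : ℕ}
    (A : EuclideanSpace ℝ (Fin d) →L[ℝ] EuclideanSpace ℝ (Fin d))
    (B : EuclideanSpace ℝ (Fin d) →L[ℝ] EuclideanSpace ℝ (Fin d) →L[ℝ] EuclideanSpace ℝ (Fin d))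
    (f : EuclideanSpace ℝ (Fin d))
    (F : EuclideanSpace ℝ (Fin d) → EuclideanSpace ℝ (Fin d))
    (hF : ∀ v, F v = f - A v - B v v)
    (R δ : ℝ) (hR : 0 < R) (hδ : 0 < δ)
    (htrap : ∀ v : EuclideanSpace ℝ (Fin d),
      ‖v‖ ∈ Icc R (R + δ) → (inner ℝ (F v) v : ℝ) ≤ 0) :
    (∀ v₀ : EuclideanSpace ℝ (Fin d), ‖v₀‖ ≤ R →
      ∃ v : ℝ → EuclideanSpace ℝ (Fin d), v 0 = v₀ ∧
        ∀ t ∈ Ici (0 : ℝ), HasDerivWithinAt v (F (v t)) (Ici 0) t) ∧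
    (∀ T : ℝ≥0∞, 0 < T → ∀ v : ℝ → EuclideanSpace ℝ (Fin d),
      ‖v 0‖ ≤ R →
      (∀ t : ℝ, 0 ≤ t → ENNReal.ofReal t < T →
        HasDerivWithinAt v (F (v t)) {s : ℝ | 0 ≤ s ∧ ENNReal.ofReal s < T} t) →
      ∀ t : ℝ, 0 ≤ t → ENNReal.ofReal t < T → ‖v t‖ ≤ R) := by
  constructor
  · -- existence
    intro v₀ hv₀R
    set r : ℝ := R + δ with hrdef
    have hr : 0 < r := by positivity
    set G : EuclideanSpace ℝ (Fin d) → EuclideanSpace ℝ (Fin d) := fun x => F (ballProj r x) with hGdef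
    have htrapG : ∀ x : EuclideanSpace ℝ (Fin d), ‖x‖ ∈ Icc R (R + δ) → (inner ℝ (G x) x : ℝ) ≤ 0 := by
      intro x hx
      have : G x = F x := by rw [hGdef]; simp only; rw [ballProj_of_le hx.2]
      rw [this]; exact htrap x hx
    -- Lipschitz bound for F on the ball of radius r
    have hFlip : ∀ x y : EuclideanSpace ℝ (Fin d), ‖x‖ ≤ r → ‖y‖ ≤ r →
        ‖F x - F y‖ ≤ (‖A‖ + 2 * ‖B‖ * r) * ‖x - y‖ := by
      intro x y hx hy
      have hexp : F x - F y = A (y - x) + (B y (y - x) + B (y - x) x) := by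
        rw [hF, hF]
        simp only [map_sub, ContinuousLinearMap.sub_apply]
        abel
      have h1 : ‖A (y - x)‖ ≤ ‖A‖ * ‖x - y‖ := by
        rw [show ‖x - y‖ = ‖y - x‖ from norm_sub_rev x y]; exact A.le_opNorm _
      have h2 : ‖B y (y - x)‖ ≤ ‖B‖ * ‖y‖ * ‖y - x‖ := B.le_opNorm₂ y (y - x)
      have h3 : ‖B (y - x) x‖ ≤ ‖B‖ * ‖y - x‖ * ‖x‖ := B.le_opNorm₂ (y - x) x
      have hyx : ‖y - x‖ = ‖x - y‖ := norm_sub_rev y x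
      rw [hyx] at h2 h3
      have hB0 : 0 ≤ ‖B‖ := ContinuousLinearMap.opNorm_nonneg B
      have hn0 : 0 ≤ ‖x - y‖ := norm_nonneg _
      calc ‖F x - F y‖ ≤ ‖A (y - x)‖ + (‖B y (y - x)‖ + ‖B (y - x) x‖) := by
            rw [hexp]; exact (norm_add_le _ _).trans (by gcongr; exact norm_add_le _ _)
        _ ≤ (‖A‖ + 2 * ‖B‖ * r) * ‖x - y‖ := by
            nlinarith [mul_le_mul_of_nonneg_right (mul_le_mul_of_nonneg_left hy hB0) hn0,
              mul_le_mul_of_nonneg_right (mul_le_mul_of_nonneg_left hx hB0) hn0]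
    set L : ℝ := ‖A‖ + 2 * ‖B‖ * r with hLdef
    have hL0 : 0 ≤ L := by positivity
    have hGlip : LipschitzWith (2 * L.toNNReal) G := by
      apply LipschitzWith.of_dist_le_mul
      intro x y
      have hp := (lipschitzWith_ballProj (E := EuclideanSpace ℝ (Fin d)) hr.le).dist_le_mul x y
      simp only [NNReal.coe_ofNat] at hp
      have h1 : dist (G x) (G y) ≤ L * dist (ballProj r x) (ballProj r y) := by
        rw [dist_eq_norm, dist_eq_norm]
        exact hFlip _ _ (norm_ballProj_le hr.le x) (norm_ballProj_le hr.le y)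
      have h2 : ((2 * L.toNNReal : ℝ≥0) : ℝ) = 2 * L := by
        push_cast
        rw [Real.coe_toNNReal _ hL0]
      rw [h2]
      calc dist (G x) (G y) ≤ L * (2 * dist x y) := h1.trans (by
            exact mul_le_mul_of_nonneg_left hp hL0)
        _ = 2 * L * dist x y := by ring
    set C : ℝ := ‖f‖ + ‖A‖ * r + ‖B‖ * r * r with hCdef
    have hC0 : 0 ≤ C := by positivity
    have hGbound : ∀ x : EuclideanSpace ℝ (Fin d), ‖G x‖ ≤ C := by
      intro x
      have hp := norm_ballProj_le hr.le x
      set p := ballProj r x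
      rw [hGdef]
      simp only
      rw [hF]
      have h1 : ‖A p‖ ≤ ‖A‖ * r :=
        (A.le_opNorm p).trans (mul_le_mul_of_nonneg_left hp (norm_nonneg _))
      have h2 : ‖B p p‖ ≤ ‖B‖ * r * r := by
        refine (B.le_opNorm₂ p p).trans ?_
        gcongr <;> exact hp
      calc ‖f - A p - B p p‖ ≤ ‖f - A p‖ + ‖B p p‖ := norm_sub_le _ _
        _ ≤ (‖f‖ + ‖A p‖) + ‖B p p‖ := by gcongr; exact norm_sub_le _ _
        _ ≤ C := by rw [hCdef]; linarith
    -- Picard–Lindelöf on each interval [0, n+1]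
    have hPL : ∀ n : ℕ, ∃ w : ℝ → EuclideanSpace ℝ (Fin d), w 0 = v₀ ∧
        ∀ t ∈ Icc (0 : ℝ) (n + 1), HasDerivWithinAt w (G (w t)) (Icc 0 (n + 1)) t := by
      intro n
      have hn1 : (0 : ℝ) ≤ (n : ℝ) + 1 := by positivity
      have hpl : IsPicardLindelof (fun _ x => G x) (tmin := 0) (tmax := (n : ℝ) + 1)
          ⟨0, le_rfl, hn1⟩ v₀ (C * ((n : ℝ) + 1)).toNNReal 0 C.toNNReal (2 * L.toNNReal) :=
        IsPicardLindelof.of_time_independent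
          (fun x _ => by rw [Real.coe_toNNReal _ hC0]; exact hGbound x)
          hGlip.lipschitzOnWith
          (by
            rw [Real.coe_toNNReal _ hC0, Real.coe_toNNReal _ (by positivity), NNReal.coe_zero,
              sub_zero]
            show C * max ((n : ℝ) + 1) (0 - 0) ≤ C * ((n : ℝ) + 1) - 0
            rw [sub_self, sub_zero, max_eq_left hn1])
      exact hpl.exists_eq_forall_mem_Icc_hasDerivWithinAt₀
    choose w hw0 hw using hPL
    -- uniqueness: the solutions agree
    have huniq : ∀ a b : ℕ, a ≤ b → EqOn (w a) (w b) (Icc 0 ((a : ℝ) + 1)) := by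
      intro a b hab
      have hab' : ((a : ℝ) + 1) ≤ ((b : ℝ) + 1) := by
        have : (a : ℝ) ≤ b := by exact_mod_cast hab
        linarith
      have hsubab : Icc (0 : ℝ) ((a : ℝ) + 1) ⊆ Icc 0 ((b : ℝ) + 1) :=
        Icc_subset_Icc le_rfl hab'
      refine ODE_solution_unique (v := fun _ x => G x) (K := 2 * L.toNNReal)
        (fun _ => hGlip) ?_ ?_ ?_ ?_ ?_
      · exact fun t ht => (hw a t ht).continuousWithinAt
      · intro t ht
        refine (hw a t ⟨ht.1, ht.2.le⟩).mono_of_mem_nhdsWithin ?_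
        refine Filter.mem_of_superset (inter_mem_nhdsWithin _ (Iic_mem_nhds ht.2)) ?_
        exact fun x hx => ⟨ht.1.trans hx.1, hx.2⟩
      · exact fun t ht => ((hw b t (hsubab ht)).continuousWithinAt).mono hsubab
      · intro t ht
        refine (hw b t (hsubab ⟨ht.1, ht.2.le⟩)).mono_of_mem_nhdsWithin ?_
        refine Filter.mem_of_superset
          (inter_mem_nhdsWithin _ (Iic_mem_nhds (lt_of_lt_of_le ht.2 hab'))) ?_
        exact fun x hx => ⟨ht.1.trans hx.1, hx.2⟩
      · rw [hw0 a, hw0 b]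
    -- each solution stays in the ball
    have hstay : ∀ n : ℕ, ∀ t ∈ Icc (0 : ℝ) ((n : ℝ) + 1), ‖w n t‖ ≤ R := by
      intro n t ht
      refine stays_in_ball G R δ hR hδ htrapG (Icc 0 ((n : ℝ) + 1))
        ⟨le_rfl, by positivity⟩ (fun u hu => Icc_subset_Icc le_rfl hu.2) (w n)
        (by rw [hw0]; exact hv₀R) (hw n) t ht ht.1
    -- glue
    refine ⟨fun t => w (⌈t⌉.toNat) t, ?_, ?_⟩
    · show w (⌈(0 : ℝ)⌉.toNat) 0 = v₀
      simp only [Int.ceil_zero, Int.toNat_zero]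
      exact hw0 0
    · intro t ht
      have ht0 : (0 : ℝ) ≤ t := ht
      set n := (⌈t⌉).toNat with hn
      have htn : t ≤ (n : ℝ) := by
        have h1 : t ≤ (⌈t⌉ : ℝ) := Int.le_ceil t
        have h2 : (⌈t⌉ : ℝ) ≤ ((⌈t⌉.toNat : ℤ) : ℝ) := by
          exact_mod_cast Int.self_le_toNat ⌈t⌉
        rw [hn]; push_cast at h2 ⊢; linarith
      have htn1 : t < (n : ℝ) + 1 := by linarith
      have hmemIcc : t ∈ Icc (0 : ℝ) ((n : ℝ) + 1) := ⟨ht0, htn1.le⟩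
      have hVeq : ∀ x ∈ Icc (0 : ℝ) ((n : ℝ) + 1), w (⌈x⌉.toNat) x = w n x := by
        intro x hx
        set m := (⌈x⌉).toNat with hm
        have hxm : x ≤ (m : ℝ) + 1 := by
          have h1 : x ≤ (⌈x⌉ : ℝ) := Int.le_ceil x
          have h2 : (⌈x⌉ : ℝ) ≤ ((⌈x⌉.toNat : ℤ) : ℝ) := by
            exact_mod_cast Int.self_le_toNat ⌈x⌉
          rw [hm]; push_cast at h2 ⊢; linarith
        rcases le_total m n with h | h
        · exact huniq m n h ⟨hx.1, hxm⟩
        · exact (huniq n m h ⟨hx.1, hx.2⟩).symm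
      have hnhds : Icc (0 : ℝ) ((n : ℝ) + 1) ∈ 𝓝[Ici 0] t := by
        refine Filter.mem_of_superset (inter_mem_nhdsWithin _ (Iic_mem_nhds htn1)) ?_
        exact fun x hx => ⟨hx.1, hx.2⟩
      have hd : HasDerivWithinAt (w n) (G (w n t)) (Ici 0) t :=
        (hw n t hmemIcc).mono_of_mem_nhdsWithin hnhds
      have hd2 : HasDerivWithinAt (fun x => w (⌈x⌉.toNat) x) (G (w n t)) (Ici 0) t := by
        refine hd.congr_of_eventuallyEq ?_ (hVeq t hmemIcc)
        exact Filter.eventuallyEq_of_mem hnhds (fun x hx => hVeq x hx)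
      have hRn : ‖w n t‖ ≤ R := hstay n t hmemIcc
      have hGF : G (w n t) = F (w (⌈t⌉.toNat) t) := by
        rw [hVeq t hmemIcc, hGdef]
        simp only
        rw [ballProj_of_le (hRn.trans (by rw [hrdef]; linarith))]
      rw [← hGF]
      exact hd2
  · -- invariance
    intro T hT v hv0 hv' t ht hlt
    refine stays_in_ball F R δ hR hδ htrap {s : ℝ | 0 ≤ s ∧ ENNReal.ofReal s < T}
      ⟨le_rfl, by simpa using hT⟩ ?_ v hv0 (fun u hu => hv' u hu.1 hu.2) t ⟨ht, hlt⟩ ht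
    intro u hu x hx
    exact ⟨hx.1, lt_of_le_of_lt (ENNReal.ofReal_le_ofReal hx.2) hu.2⟩
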